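/- Let d ≥ 2 and N ≥ 1 be integers, and for each positive integer n set D_n = Σ_{i=0}^{N} d^{n·i}. If there exists a positive integer n with gcd(D_n, N+1) = 1, then there exists a positive integer n with n ≤ φ(N+1) (Euler's totient of N+1) and gcd(D_n, N+1) = 1. (Hence the hypothesis of the paper's main theorem need only be checked for n in the range [1, φ(N+1)].) -/

import Mathlib

theorem field_of_definition_totient_bound (d N : ℕ) (hd : 2 ≤ d) (hN : 1 ≤ N)
    (h : ∃ n : ℕ, 0 < n ∧ Nat.gcd (∑ i ∈ Finset.range (N + 1), d ^ (n * i)) (N + 1) = 1) :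
    ∃ n : ℕ, 0 < n ∧ n ≤ Nat.totient (N + 1) ∧
      Nat.gcd (∑ i ∈ Finset.range (N + 1), d ^ (n * i)) (N + 1) = 1 := by
  obtain ⟨n, hn, hgcd⟩ := h
  have hφ : 0 < Nat.totient (N + 1) := Nat.totient_pos.mpr (by omega)
  set φ := Nat.totient (N + 1) with hφdef
  refine ⟨(n - 1) % φ + 1, Nat.succ_pos _, ?_, ?_⟩
  · have := Nat.mod_lt (n - 1) hφ; omega
  · set m := (n - 1) % φ + 1 with hm
    have hmn : m ≤ n := by
      have := Nat.mod_le (n - 1) φ; omega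
    have hdm : φ ∣ n - m := by
      have h1 : φ ∣ (n - 1) - (n - 1) % φ := Nat.dvd_sub_mod (n - 1)
      have : n - m = (n - 1) - (n - 1) % φ := by omega
      rw [this]; exact h1
    obtain ⟨t, ht⟩ := hdm
    have hnt : n = m + φ * t := by omega
    by_contra hne
    set g := Nat.gcd (∑ i ∈ Finset.range (N + 1), d ^ (m * i)) (N + 1) with hg
    have hp : Nat.Prime g.minFac := Nat.minFac_prime hne
    set p := g.minFac with hpdef
    have hpDm : p ∣ ∑ i ∈ Finset.range (N + 1), d ^ (m * i) :=
      dvd_trans (Nat.minFac_dvd g) (Nat.gcd_dvd_left _ _)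
    have hpM : p ∣ N + 1 := dvd_trans (Nat.minFac_dvd g) (Nat.gcd_dvd_right _ _)
    by_cases hpd : p ∣ d
    · -- then D_m ≡ 1 mod p, contradiction
      have hsum : (∑ i ∈ Finset.range (N + 1), d ^ (m * i))
          = (∑ i ∈ Finset.range N, d ^ (m * (i + 1))) + d ^ (m * 0) :=
        Finset.sum_range_succ' _ _
      have hdvd : p ∣ ∑ i ∈ Finset.range N, d ^ (m * (i + 1)) := by
        refine Finset.dvd_sum fun i _ => ?_
        exact dvd_trans hpd (dvd_pow_self d (by positivity))
      have : p ∣ d ^ (m * 0) := (Nat.dvd_add_right hdvd).mp (hsum ▸ hpDm)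
      simp at this
      exact hp.one_lt.ne' this
    · -- p ∤ d : D_n ≡ D_m mod p
      haveI : Fact p.Prime := ⟨hp⟩
      have hd0 : (d : ZMod p) ≠ 0 := by
        rw [Ne, ZMod.natCast_eq_zero_iff]
        exact hpd
      have hφdvd : (p - 1) ∣ φ := by
        have h1 : Nat.totient p ∣ φ := Nat.totient_dvd_of_dvd hpM
        rwa [Nat.totient_prime hp] at h1
      have hdφ : (d : ZMod p) ^ φ = 1 := by
        obtain ⟨c, hc⟩ := hφdvd
        rw [hc, pow_mul, ZMod.pow_card_sub_one_eq_one hd0, one_pow]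
      have hcast : ((∑ i ∈ Finset.range (N + 1), d ^ (n * i) : ℕ) : ZMod p)
          = ((∑ i ∈ Finset.range (N + 1), d ^ (m * i) : ℕ) : ZMod p) := by
        push_cast
        refine Finset.sum_congr rfl fun i _ => ?_
        rw [hnt]
        rw [show (m + φ * t) * i = m * i + φ * (t * i) by ring]
        rw [pow_add, pow_mul, pow_mul, hdφ, one_pow, mul_one]
      have hpDn : p ∣ ∑ i ∈ Finset.range (N + 1), d ^ (n * i) := by
        rw [← ZMod.natCast_eq_zero_iff, hcast,
          ZMod.natCast_eq_zero_iff]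
        exact hpDm
      have : p ∣ 1 := hgcd ▸ Nat.dvd_gcd hpDn hpM
      exact hp.one_lt.ne' (Nat.dvd_one.mp this)
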